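/- Let τ be a finite tree having n ≥ 2 distinguished leaves labeled 1,…,n. For a vertex w of τ, say that a pair {i,j} of labels passes through w if w lies on the unique path in τ between the leaves labeled i and j. Then for every element v of the subsemigroup of ℕ^n generated by the vectors e_i + e_j (1 ≤ i < j ≤ n), there exists a vertex w of τ such that v lies in the subsemigroup of ℕ^n generated by the vectors e_i + e_j with {i,j} passing through w. -/

import Mathlib

open Finset

private lemma pairing_lemma {n : ℕ} {α : Type*} [DecidableEq α] (c : Fin n → α) (N : ℕ) :
    ∀ v : Fin n → ℕ, (∑ i, v i) = N → Even N →
      (∀ a : α, 2 * ∑ i ∈ Finset.univ.filter (fun i => c i = a), v i ≤ N) →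
      v ∈ AddSubmonoid.closure
        {x : Fin n → ℕ | ∃ i j : Fin n, i ≠ j ∧ c i ≠ c j ∧
          x = Pi.single i 1 + Pi.single j 1} := by
  induction N using Nat.strong_induction_on with
  | _ N IH =>
  intro v hsum heven hclass
  set W : α → ℕ := fun a => ∑ l ∈ Finset.univ.filter (fun l => c l = a), v l with hW
  rcases Nat.eq_zero_or_pos N with hN0 | hNpos
  · have hv0 : v = 0 := by
      funext k
      have h0 : ∑ i, v i = 0 := by omega
      exact Finset.sum_eq_zero_iff.mp h0 k (mem_univ k)
    rw [hv0]
    exact AddSubmonoid.zero_mem _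
  · obtain ⟨m, hm⟩ := heven
    have hs : (Finset.univ.filter (fun k => v k ≠ 0)).Nonempty := by
      by_contra h
      have hall : ∀ k, v k = 0 := by
        intro k
        by_contra hk
        exact h ⟨k, mem_filter.mpr ⟨mem_univ _, hk⟩⟩
      have : ∑ i, v i = 0 := Finset.sum_eq_zero fun k _ => hall k
      omega
    obtain ⟨i, hi, hmaxi⟩ := Finset.exists_max_image _ (fun k => W (c k)) hs
    have hvi : v i ≠ 0 := (mem_filter.mp hi).2
    have ht : ((Finset.univ.filter (fun k => v k ≠ 0)).filter (fun k => c k ≠ c i)).Nonempty := by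
      by_contra h
      have hz : ∀ x ∈ Finset.univ, x ∉ Finset.univ.filter (fun l => c l = c i) → v x = 0 := by
        intro x _ hx
        by_contra hvx
        have hcx : c x ≠ c i := by
          intro hc
          exact hx (mem_filter.mpr ⟨mem_univ _, hc⟩)
        exact h ⟨x, mem_filter.mpr ⟨mem_filter.mpr ⟨mem_univ _, hvx⟩, hcx⟩⟩
      have hWN : W (c i) = N := by
        show (∑ l ∈ Finset.univ.filter (fun l => c l = c i), v l) = N
        rw [Finset.sum_subset (Finset.subset_univ _) hz]
        exact hsum
      have h2 : 2 * W (c i) ≤ N := hclass (c i)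
      omega
    obtain ⟨j, hj, hmaxj⟩ := Finset.exists_max_image _ (fun k => W (c k)) ht
    have hcij : c j ≠ c i := (mem_filter.mp hj).2
    have hvj : v j ≠ 0 := (mem_filter.mp (mem_filter.mp hj).1).2
    have hij : i ≠ j := fun h => hcij (by rw [h])
    set pair : Fin n → ℕ := Pi.single i 1 + Pi.single j 1 with hpair
    set v' : Fin n → ℕ := fun k => v k - pair k with hv'
    have hpairk : ∀ k, pair k = (if k = i then 1 else 0) + (if k = j then 1 else 0) := by
      intro k
      rw [hpair]
      simp [Pi.single_apply]
    have hvpair : v' + pair = v := by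
      funext k
      simp only [Pi.add_apply, hv']
      rw [hpairk]
      by_cases h1 : k = i
      · have h2 : k ≠ j := h1 ▸ hij
        have h3 : v k ≠ 0 := h1 ▸ hvi
        rw [if_pos h1, if_neg h2]
        omega
      · by_cases h2 : k = j
        · have h3 : v k ≠ 0 := h2 ▸ hvj
          rw [if_neg h1, if_pos h2]
          omega
        · simp [h1, h2]
    have hpairsum : ∑ k, pair k = 2 := by
      have h1 : ∀ k ∈ Finset.univ, pair k = (if k = i then 1 else 0) + (if k = j then 1 else 0) :=
        fun k _ => hpairk k
      rw [Finset.sum_congr rfl h1, Finset.sum_add_distrib,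
        Finset.sum_ite_eq' Finset.univ i (fun _ => 1),
        Finset.sum_ite_eq' Finset.univ j (fun _ => 1)]
      simp
    have hsum' : ∑ k, v' k = N - 2 := by
      have h1 : ∑ k, (v' k + pair k) = N := by
        rw [← hsum]
        apply Finset.sum_congr rfl
        intro k _
        exact congrFun hvpair k
      rw [Finset.sum_add_distrib, hpairsum] at h1
      omega
    set W' : α → ℕ := fun a => ∑ l ∈ Finset.univ.filter (fun l => c l = a), v' l with hW'
    have hrel : ∀ a, W a = W' a + ((if c i = a then 1 else 0) + (if c j = a then 1 else 0)) := by
      intro a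
      show (∑ l ∈ Finset.univ.filter (fun l => c l = a), v l)
        = (∑ l ∈ Finset.univ.filter (fun l => c l = a), v' l) + _
      have h1 : ∀ l ∈ Finset.univ.filter (fun l => c l = a), v l = v' l + pair l :=
        fun l _ => (congrFun hvpair l).symm
      rw [Finset.sum_congr rfl h1, Finset.sum_add_distrib]
      congr 1
      have h2 : ∀ l ∈ Finset.univ.filter (fun l => c l = a), pair l
          = (if l = i then 1 else 0) + (if l = j then 1 else 0) := fun l _ => hpairk l
      rw [Finset.sum_congr rfl h2, Finset.sum_add_distrib,
        Finset.sum_ite_eq' _ i (fun _ => 1), Finset.sum_ite_eq' _ j (fun _ => 1)]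
      simp only [mem_filter, mem_univ, true_and]
    have hclass' : ∀ a : α, 2 * ∑ l ∈ Finset.univ.filter (fun l => c l = a), v' l ≤ N - 2 := by
      intro a
      show 2 * W' a ≤ N - 2
      have hWa : 2 * W a ≤ N := hclass a
      have h3 := hrel a
      by_cases hai : a = c i
      · rw [if_pos hai.symm, if_neg (fun h => hcij (hai ▸ h))] at h3
        omega
      · by_cases haj : a = c j
        · rw [if_neg (fun h => hai h.symm), if_pos haj.symm] at h3
          omega
        · rw [if_neg (fun h => hai h.symm), if_neg (fun h => haj h.symm)] at h3
          rcases Nat.eq_zero_or_pos (W a) with h0 | hWpos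
          · omega
          · have hWane : (∑ l ∈ Finset.univ.filter (fun l => c l = a), v l) ≠ 0 := by
              show W a ≠ 0
              omega
            obtain ⟨k, hk, hvk⟩ := Finset.exists_ne_zero_of_sum_ne_zero hWane
            have hck : c k = a := (mem_filter.mp hk).2
            have hkt : k ∈ (Finset.univ.filter (fun k => v k ≠ 0)).filter (fun k => c k ≠ c i) :=
              mem_filter.mpr ⟨mem_filter.mpr ⟨mem_univ _, hvk⟩, fun h => hai (hck.symm.trans h)⟩
            have h4 : W a ≤ W (c j) := hck ▸ hmaxj k hkt
            have h5 : W (c j) ≤ W (c i) := hmaxi j (mem_filter.mp hj).1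
            have hWi : 2 * W (c i) ≤ N := hclass (c i)
            have hd12 : Disjoint (Finset.univ.filter (fun l => c l = c i))
                (Finset.univ.filter (fun l => c l = c j)) := by
              rw [Finset.disjoint_left]
              intro x hx1 hx2
              exact hcij ((mem_filter.mp hx2).2.symm.trans (mem_filter.mp hx1).2)
            have hd3 : Disjoint ((Finset.univ.filter (fun l => c l = c i)) ∪ (Finset.univ.filter (fun l => c l = c j)))
                (Finset.univ.filter (fun l => c l = a)) := by
              rw [Finset.disjoint_left]
              intro x hx1 hx2
              rcases Finset.mem_union.mp hx1 with hx | hx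
              · exact hai ((mem_filter.mp hx2).2.symm.trans (mem_filter.mp hx).2)
              · exact haj ((mem_filter.mp hx2).2.symm.trans (mem_filter.mp hx).2)
            have hsum3 : W (c i) + W (c j) + W a ≤ N := by
              show (∑ l ∈ Finset.univ.filter (fun l => c l = c i), v l)
                + (∑ l ∈ Finset.univ.filter (fun l => c l = c j), v l)
                + (∑ l ∈ Finset.univ.filter (fun l => c l = a), v l) ≤ N
              rw [← Finset.sum_union hd12, ← Finset.sum_union hd3, ← hsum]
              exact Finset.sum_le_sum_of_subset (Finset.subset_univ _)
            omega
    rw [← hvpair]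
    refine AddSubmonoid.add_mem _ ?_ (AddSubmonoid.subset_closure ⟨i, j, hij, fun h => hcij h.symm, hpair⟩)
    exact IH (N - 2) (by omega) v' hsum' ⟨m - 1, by omega⟩ hclass'

open SimpleGraph


private lemma getVert_one_append' {V : Type*} {G : SimpleGraph V} {u x y : V}
    (t : G.Walk u x) (d : G.Walk x y) (h : t.length ≠ 0) :
    (t.append d).getVert 1 = t.getVert 1 := by
  cases t with
  | nil => simp at h
  | cons hadj t' =>
    rw [SimpleGraph.Walk.cons_append, SimpleGraph.Walk.getVert_cons_succ,
      SimpleGraph.Walk.getVert_cons_succ, SimpleGraph.Walk.getVert_zero,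
      SimpleGraph.Walk.getVert_zero]

/-- Let `τ` be a finite tree with `n ≥ 2` distinguished (distinct)
leaves labeled `1, …, n`.  Say a pair `{i, j}` of labels passes through a vertex `w` if
`w` lies on the (unique) path in `τ` between the leaves labeled `i` and `j`.  Then every
element of the submonoid of `ℕⁿ` generated by the vectors `e_i + e_j` (`i < j`) lies,
for some vertex `w`, in the submonoid generated by the vectors `e_i + e_j` with
`{i, j}` passing through `w`. -/
theorem mem_submonoid_of_pairs_through_common_vertex
    {V : Type*} [Fintype V] (G : SimpleGraph V) [DecidableRel G.Adj]
    (hG : G.IsTree)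
    (n : ℕ) (hn : 2 ≤ n) (leaf : Fin n → V)
    (hinj : Function.Injective leaf)
    (hdeg : ∀ i, G.degree (leaf i) = 1)
    (v : Fin n → ℕ)
    (hv : v ∈ AddSubmonoid.closure
      {x : Fin n → ℕ | ∃ i j : Fin n, i < j ∧
        x = Pi.single i 1 + Pi.single j 1}) :
    ∃ w : V, v ∈ AddSubmonoid.closure
      {x : Fin n → ℕ | ∃ i j : Fin n, i < j ∧
        (∃ pth : G.Walk (leaf i) (leaf j), pth.IsPath ∧ w ∈ pth.support) ∧
        x = Pi.single i 1 + Pi.single j 1} := by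
  classical
  have hconn := hG.isConnected
  have hex : ∀ x y : V, ∃ p : G.Walk x y, p.IsPath ∧ p.length = G.dist x y := by
    intro x y
    obtain ⟨p, hp⟩ := hconn.exists_walk_length_eq_dist x y
    refine ⟨p.bypass, p.bypass_isPath, le_antisymm ?_ (SimpleGraph.dist_le _)⟩
    exact hp ▸ p.length_bypass_le
  choose P hPpath hPlen using hex
  have huniq : ∀ (x y : V) (q : G.Walk x y), q.IsPath → q = P x y := by
    intro x y q hq
    obtain ⟨p₀, _, hu⟩ := hG.existsUnique_path x y
    exact (hu q hq).trans (hu (P x y) (hPpath x y)).symm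
  set c : V → Fin n → V := fun w i => if leaf i = w then w else (P w (leaf i)).getVert 1
    with hc
  have hlenpos : ∀ (w : V) (i : Fin n), leaf i ≠ w → (P w (leaf i)).length ≠ 0 := by
    intro w i hiw h0
    exact hiw (SimpleGraph.Walk.eq_of_length_eq_zero h0).symm
  have hadjc : ∀ (w : V) (i : Fin n), leaf i ≠ w → G.Adj w (c w i) := by
    intro w i hiw
    have h0 := hlenpos w i hiw
    have := (P w (leaf i)).adj_getVert_succ (i := 0) (by omega)
    rw [SimpleGraph.Walk.getVert_zero] at this
    simpa [hc, hiw] using this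
  have hcross : ∀ (w : V) (i j : Fin n), c w i ≠ c w j →
      ∃ pth : G.Walk (leaf i) (leaf j), pth.IsPath ∧ w ∈ pth.support := by
    intro w i j hne
    by_cases hiw : leaf i = w
    · refine ⟨P (leaf i) (leaf j), hPpath _ _, ?_⟩
      rw [← hiw]
      exact SimpleGraph.Walk.start_mem_support _
    · by_cases hjw : leaf j = w
      · refine ⟨P (leaf i) (leaf j), hPpath _ _, ?_⟩
        rw [← hjw]
        exact SimpleGraph.Walk.end_mem_support _
      · set p := P w (leaf i) with hp
        set q := P w (leaf j) with hq
        have hkey : ∀ x, x ∈ p.support → x ∈ q.support → x = w := by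
          intro x hxp hxq
          by_contra hxw
          have ht1 : (p.takeUntil x hxp).IsPath := (hPpath w (leaf i)).takeUntil hxp
          have ht2 : (q.takeUntil x hxq).IsPath := (hPpath w (leaf j)).takeUntil hxq
          have heq : p.takeUntil x hxp = q.takeUntil x hxq :=
            (huniq w x _ ht1).trans (huniq w x _ ht2).symm
          have hl1 : (p.takeUntil x hxp).length ≠ 0 := by
            intro h0
            exact hxw (SimpleGraph.Walk.eq_of_length_eq_zero h0).symm
          have hl2 : (q.takeUntil x hxq).length ≠ 0 := by
            intro h0
            exact hxw (SimpleGraph.Walk.eq_of_length_eq_zero h0).symm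
          have e1 : p.getVert 1 = (p.takeUntil x hxp).getVert 1 := by
            conv_lhs => rw [← p.take_spec hxp]
            rw [getVert_one_append' _ _ hl1]
          have e2 : q.getVert 1 = (q.takeUntil x hxq).getVert 1 := by
            conv_lhs => rw [← q.take_spec hxq]
            rw [getVert_one_append' _ _ hl2]
          apply hne
          simp only [hc, if_neg hiw, if_neg hjw]
          rw [← hp, ← hq, e1, e2, heq]
        refine ⟨p.reverse.append q, ?_, ?_⟩
        · rw [SimpleGraph.Walk.isPath_def, SimpleGraph.Walk.support_append,
            SimpleGraph.Walk.support_reverse]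
          refine List.Nodup.append ?_ ?_ ?_
          · exact List.nodup_reverse.mpr (hPpath w (leaf i)).support_nodup
          · exact ((hPpath w (leaf j)).support_nodup).tail
          · intro x hx1 hx2
            have hxp : x ∈ p.support := List.mem_reverse.mp hx1
            have hxq : x ∈ q.support := by
              rw [SimpleGraph.Walk.support_eq_cons]
              exact List.mem_cons_of_mem _ hx2
            have hxw := hkey x hxp hxq
            rw [hxw] at hx2
            have hnd := (hPpath w (leaf j)).support_nodup
            rw [SimpleGraph.Walk.support_eq_cons] at hnd
            exact (List.nodup_cons.mp hnd).1 hx2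
        · rw [SimpleGraph.Walk.mem_support_append_iff]
          left
          rw [SimpleGraph.Walk.support_reverse, List.mem_reverse]
          exact p.start_mem_support
  have hdist : ∀ (w : V) (i : Fin n), leaf i ≠ w →
      G.dist (c w i) (leaf i) + 1 ≤ G.dist w (leaf i) := by
    intro w i hiw
    have hcv : c w i = (P w (leaf i)).getVert 1 := by simp only [hc, if_neg hiw]
    have hmem : (P w (leaf i)).getVert 1 ∈ (P w (leaf i)).support :=
      SimpleGraph.Walk.mem_support_iff_exists_getVert.mpr ⟨1, rfl, by
        have := hlenpos w i hiw; omega⟩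
    have h1 : G.dist ((P w (leaf i)).getVert 1) (leaf i)
        ≤ ((P w (leaf i)).dropUntil _ hmem).length := SimpleGraph.dist_le _
    have h2 : ((P w (leaf i)).takeUntil _ hmem).length
        + ((P w (leaf i)).dropUntil _ hmem).length = (P w (leaf i)).length := by
      rw [← SimpleGraph.Walk.length_append, (P w (leaf i)).take_spec hmem]
    have hl : ((P w (leaf i)).takeUntil _ hmem).length ≠ 0 := by
      intro h0
      have hwx : w = (P w (leaf i)).getVert 1 := SimpleGraph.Walk.eq_of_length_eq_zero h0
      have hadj := hadjc w i hiw
      rw [hcv] at hadj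
      rw [← hwx] at hadj
      exact G.irrefl hadj
    have h3 : (P w (leaf i)).length = G.dist w (leaf i) := hPlen w (leaf i)
    rw [hcv]
    omega
  have htri : ∀ (w a : V), G.Adj w a → ∀ x : V, G.dist a x ≤ G.dist w x + 1 := by
    intro w a hadj x
    obtain ⟨q, hq⟩ := hconn.exists_walk_length_eq_dist w x
    have := SimpleGraph.dist_le (SimpleGraph.Walk.cons hadj.symm q)
    simpa [hq] using this
  have hfacts : Even (∑ i, v i) ∧ ∀ i, 2 * v i ≤ ∑ k, v k := by
    induction hv using AddSubmonoid.closure_induction with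
    | mem x hx =>
      obtain ⟨i, j, hij, rfl⟩ := hx
      have hij' : i ≠ j := ne_of_lt hij
      have hsum2 : ∑ l : Fin n, ((Pi.single i 1 + Pi.single j 1 : Fin n → ℕ)) l = 2 := by
        simp only [Pi.add_apply, Pi.single_apply]
        rw [Finset.sum_add_distrib, Finset.sum_ite_eq' Finset.univ i (fun _ => 1),
          Finset.sum_ite_eq' Finset.univ j (fun _ => 1)]
        simp
      constructor
      · rw [hsum2]
        exact ⟨1, rfl⟩
      · intro k
        rw [hsum2]
        have hk : ((Pi.single i 1 + Pi.single j 1 : Fin n → ℕ)) k ≤ 1 := by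
          simp only [Pi.add_apply, Pi.single_apply]
          by_cases h1 : k = i
          · have h2 : ¬ k = j := fun h => hij' (h1 ▸ h ▸ rfl)
            simp only [h1, h2, if_pos rfl, if_neg h2]
            simp [hij']
          · by_cases h2 : k = j
            · simp only [h1, h2, if_neg h1, if_pos rfl]
              simp
              intro h
              exact absurd h.symm hij'
            · simp [h1, h2]
        omega
    | zero =>
      constructor
      · simp
      · intro k; simp
    | add x y hx hy ihx ihy =>
      obtain ⟨hex', hbx⟩ := ihx
      obtain ⟨hey, hby⟩ := ihy
      have hsplit : ∑ i, (x + y) i = (∑ i, x i) + ∑ i, y i := by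
        simp only [Pi.add_apply]
        rw [Finset.sum_add_distrib]
      constructor
      · rw [hsplit]
        exact hex'.add hey
      · intro k
        rw [hsplit]
        have h1 := hbx k
        have h2 := hby k
        simp only [Pi.add_apply]
        omega
  obtain ⟨hNeven, hN2⟩ := hfacts
  set N := ∑ i, v i with hNdef
  obtain ⟨w, -, hwmin⟩ := Finset.exists_min_image (Finset.univ : Finset V)
    (fun x => ∑ i, v i * G.dist x (leaf i)) ⟨leaf ⟨0, by omega⟩, mem_univ _⟩
  have hcent : ∀ a : V, 2 * ∑ i ∈ Finset.univ.filter (fun i => c w i = a), v i ≤ N := by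
    intro a
    rcases (Finset.univ.filter (fun i => c w i = a)).eq_empty_or_nonempty with he | hne
    · rw [he]
      simp
    · obtain ⟨i₁, hi₁⟩ := hne
      have hi₁c : c w i₁ = a := (mem_filter.mp hi₁).2
      by_cases haw : a = w
      · have hmemleaf : ∀ k ∈ Finset.univ.filter (fun i => c w i = a), leaf k = w := by
          intro k hk
          by_contra hkw
          have hadj := hadjc w k hkw
          rw [(mem_filter.mp hk).2, haw] at hadj
          exact G.irrefl hadj
        have hsub : Finset.univ.filter (fun i => c w i = a) ⊆ {i₁} := by
          intro k hk
          have := hinj ((hmemleaf k hk).trans (hmemleaf i₁ hi₁).symm)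
          simp [this]
        have hle : ∑ i ∈ Finset.univ.filter (fun i => c w i = a), v i ≤ v i₁ := by
          have := Finset.sum_le_sum_of_subset (f := v) hsub
          simpa using this
        have := hN2 i₁
        omega
      · have hi₁w : leaf i₁ ≠ w := by
          intro h
          apply haw
          rw [← hi₁c]
          simp [hc, h]
        have hadj : G.Adj w a := by
          rw [← hi₁c]
          exact hadjc w i₁ hi₁w
        have hkey1 : ∀ i ∈ Finset.univ.filter (fun i => c w i = a),
            G.dist a (leaf i) + 1 ≤ G.dist w (leaf i) := by
          intro i hi
          have hc' : c w i = a := (mem_filter.mp hi).2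
          have hiw : leaf i ≠ w := by
            intro h
            apply haw
            rw [← hc']
            simp [hc, h]
          have := hdist w i hiw
          rwa [hc'] at this
        have hkey2 : ∀ i : Fin n, G.dist a (leaf i) ≤ G.dist w (leaf i) + 1 :=
          fun i => htri w a hadj (leaf i)
        have hfa : (∑ i, v i * G.dist w (leaf i)) ≤ ∑ i, v i * G.dist a (leaf i) :=
          hwmin a (mem_univ a)
        have hsplitw := Finset.sum_filter_add_sum_filter_not Finset.univ
          (fun i => c w i = a) (fun i => v i * G.dist w (leaf i))
        have hsplita := Finset.sum_filter_add_sum_filter_not Finset.univ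
          (fun i => c w i = a) (fun i => v i * G.dist a (leaf i))
        have hsplitv := Finset.sum_filter_add_sum_filter_not Finset.univ
          (fun i => c w i = a) (fun i => v i)
        have hA : (∑ i ∈ Finset.univ.filter (fun i => c w i = a), v i * G.dist a (leaf i))
            + ∑ i ∈ Finset.univ.filter (fun i => c w i = a), v i
            ≤ ∑ i ∈ Finset.univ.filter (fun i => c w i = a), v i * G.dist w (leaf i) := by
          rw [← Finset.sum_add_distrib]
          apply Finset.sum_le_sum
          intro i hi
          calc v i * G.dist a (leaf i) + v i = v i * (G.dist a (leaf i) + 1) := by ring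
            _ ≤ v i * G.dist w (leaf i) := Nat.mul_le_mul_left _ (hkey1 i hi)
        have hB : (∑ i ∈ Finset.univ.filter (fun i => ¬ c w i = a), v i * G.dist a (leaf i))
            ≤ (∑ i ∈ Finset.univ.filter (fun i => ¬ c w i = a), v i * G.dist w (leaf i))
            + ∑ i ∈ Finset.univ.filter (fun i => ¬ c w i = a), v i := by
          rw [← Finset.sum_add_distrib]
          apply Finset.sum_le_sum
          intro i hi
          calc v i * G.dist a (leaf i) ≤ v i * (G.dist w (leaf i) + 1) :=
                Nat.mul_le_mul_left _ (hkey2 i)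
            _ = v i * G.dist w (leaf i) + v i := by ring
        rw [← hNdef] at hsplitv
        omega
  refine ⟨w, ?_⟩
  have hpl := pairing_lemma (c w) N v hNdef.symm hNeven hcent
  refine AddSubmonoid.closure_mono ?_ hpl
  rintro x ⟨i, j, hij, hcij, rfl⟩
  rcases lt_or_gt_of_ne hij with h | h
  · exact ⟨i, j, h, hcross w i j hcij, rfl⟩
  · obtain ⟨pth, hp1, hp2⟩ := hcross w j i hcij.symm
    exact ⟨j, i, h, ⟨pth, hp1, hp2⟩, add_comm _ _⟩
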